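/- Let J be a real symmetric 3×3 matrix, ε a nonzero real number, W a real 3×3 matrix, and ξ a real 3×3 skew-symmetric matrix. Then the function s ↦ −(1/ε)·trace(J·exp(s·ξ)·W) is differentiable at s = 0 and its derivative there equals (1/2)·trace( ((1/ε)·(W·J − J·Wᵀ))·ξᵀ ). (Hence the discrete Legendre transformation of the Moser–Veselov discrete Lagrangian ℓ_d^{(1,ε)}(W) = −(1/ε)·trace(J·W), defined by right trivialisation of its derivative, is W ↦ (1/ε)·(W·J − J·Wᵀ).) -/

import Mathlib

open Matrix

noncomputable section

attribute [local instance] Matrix.linftyOpNormedRing Matrix.linftyOpNormedAlgebra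

/-- Let `J` be a real symmetric `3×3` matrix, `ε ≠ 0`, `W` a real `3×3`
matrix and `ξ` skew-symmetric. Then `s ↦ −(1/ε)·trace(J·exp(s·ξ)·W)` is differentiable at
`s = 0` with derivative `(1/2)·trace(((1/ε)·(W·J − J·Wᵀ))·ξᵀ)`; hence the discrete Legendre
transformation of the Moser–Veselov discrete Lagrangian is `W ↦ (1/ε)·(W·J − J·Wᵀ)`. -/
theorem suslov_discrete_legendre_moser_veselov
    (J : Matrix (Fin 3) (Fin 3) ℝ) (hJ : Jᵀ = J)
    (ε : ℝ) (hε : ε ≠ 0)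
    (W ξ : Matrix (Fin 3) (Fin 3) ℝ) (hξ : ξᵀ = -ξ) :
    HasDerivAt (fun s : ℝ => -(1 / ε) * (J * NormedSpace.exp (s • ξ) * W).trace)
      ((1 / 2 : ℝ) * (((1 / ε) • (W * J - J * Wᵀ)) * ξᵀ).trace) 0 := by
  have hexp : HasDerivAt (fun s : ℝ => NormedSpace.exp (s • ξ)) ξ 0 := by
    have := hasDerivAt_exp_smul_const (𝕂 := ℝ) ξ (0 : ℝ)
    simp only [zero_smul, NormedSpace.exp_zero, one_mul] at this
    exact this
  have hmul : HasDerivAt (fun s : ℝ => J * NormedSpace.exp (s • ξ) * W)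
      (J * ξ * W) 0 := (hexp.const_mul J).mul_const W
  have htr : HasDerivAt (fun s : ℝ => (J * NormedSpace.exp (s • ξ) * W).trace)
      ((J * ξ * W).trace) 0 := by
    have := (((Matrix.traceLinearMap (Fin 3) ℝ ℝ).toContinuousLinearMap).hasFDerivAt (x := J * NormedSpace.exp ((0:ℝ) • ξ) * W)).comp_hasDerivAt 0 hmul
    exact this
  have h := htr.const_mul (-(1 / ε))
  refine h.congr_deriv ?_
  -- scalar identity
  have h1 : (W * J * ξᵀ).trace = -(J * ξ * W).trace := by
    rw [hξ, Matrix.mul_neg, Matrix.trace_neg, Matrix.trace_mul_cycle W J ξ,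
      Matrix.trace_mul_cycle ξ W J]
  have h2 : (J * Wᵀ * ξᵀ).trace = (J * ξ * W).trace := by
    have : (J * Wᵀ * ξᵀ) = (ξ * W * Jᵀ)ᵀ := by
      simp [Matrix.transpose_mul, Matrix.mul_assoc]
    rw [this, Matrix.trace_transpose, hJ, Matrix.trace_mul_cycle]
  rw [Matrix.smul_mul, Matrix.trace_smul, Matrix.sub_mul, Matrix.trace_sub, h1, h2]
  simp [smul_eq_mul]
  ring
end
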